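/- Fix ν. Suppose X, Y, D are nonempty closed sets, Y^ν is nonempty and compact, g^ν and H^ν are continuous, f^ν is continuous relative to its domain dom f^ν, which is closed, and for each x̄ ∈ X and ε > 0 there is ρ > 0 such that for all z ∈ Y^ν and x ∈ X with ‖x − x̄‖₂ ≤ ρ: |g^ν(x,z) − g^ν(x̄,z)| ≤ ε and ‖H^ν(x,z) − H^ν(x̄,z)‖ ≤ ε. Let the outer approximation algorithm generate iterates: starting from (x⁰,y⁰,u⁰,α⁰,λ⁰) ∈ C and Y^ν₀ = ∅, at each step k ≥ 1 choose z^k ∈ δ^k-argmin_{z∈Y^ν} [ g^ν(x^{k−1},z) + λ^{k−1}·dist(H^ν(x^{k−1},z), D) ], set Y^ν_k = Y^ν_{k−1} ∪ {z^k}, and choose (x^k,y^k,u^k,α^k,λ^k) ∈ ε^k-argmin_{w∈C} { ψ₀(w) | ψ_z(w) ≤ 0 for all z ∈ Y^ν_k }, with ε^k, δ^k → 0. If along a subsequence N the iterates (x^k,y^k,u^k,α^k,λ^k) converge to (x̂,ŷ,û,α̂,λ̂), then (x̂,ŷ,û,α̂,λ̂) is an optimal solution of (P)^ν and ψ₀(x^k,y^k,u^k,α^k,λ^k)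 → 𝔪^ν along N. -/

import Mathlib

open Filter Topology Metric Set

attribute [local instance] Classical.propDecidable

noncomputable section

/-- `ℝ^n` with the Euclidean norm. -/
abbrev Rn (n : ℕ) : Type := EuclideanSpace ℝ (Fin n)

variable {n m : ℕ} {Q : Type*} [NormedAddCommGroup Q]

/-- `(x, y)` is feasible in the bilevel problem (P): `x ∈ X` and
`y ∈ τ-argmin_{z ∈ Y} { g(x,z) | H(x,z) ∈ D }`. -/
def PFeas (X : Set (Rn n)) (Y : Set (Rn m)) (D : Set Q)
    (g : Rn n × Rn m → ℝ) (H : Rn n × Rn m → Q) (τ : ℝ)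
    (x : Rn n) (y : Rn m) : Prop :=
  x ∈ X ∧ y ∈ Y ∧ H (x, y) ∈ D ∧
    ∀ z ∈ Y, H (x, z) ∈ D → g (x, y) ≤ g (x, z) + τ

/-- The minimum value `𝔪` of (P). -/
def PVal (X : Set (Rn n)) (Y : Set (Rn m)) (D : Set Q)
    (f : Rn n × Rn m → EReal) (g : Rn n × Rn m → ℝ) (H : Rn n × Rn m → Q)
    (τ : ℝ) : EReal :=
  ⨅ (x : Rn n) (y : Rn m) (_ : PFeas X Y D g H τ x y), f (x, y)

/-- Optimal solution of (P): feasible, finite objective value attaining `𝔪`. -/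
def POpt (X : Set (Rn n)) (Y : Set (Rn m)) (D : Set Q)
    (f : Rn n × Rn m → EReal) (g : Rn n × Rn m → ℝ) (H : Rn n × Rn m → Q)
    (τ : ℝ) (x : Rn n) (y : Rn m) : Prop :=
  PFeas X Y D g H τ x y ∧ f (x, y) ≠ ⊤ ∧ f (x, y) = PVal X Y D f g H τ

/-- Feasibility in the alternative problem (P)^ν with data `Yn, gn, Hn, lamBar, τn`. -/
def PnuFeas (X : Set (Rn n)) (Y : Set (Rn m)) (D : Set Q) (Yn : Set (Rn m))
    (gn : Rn n × Rn m → ℝ) (Hn : Rn n × Rn m → Q) (lamBar τn : ℝ)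
    (x : Rn n) (y : Rn m) (u : Q) (α lam : ℝ) : Prop :=
  x ∈ X ∧ y ∈ Y ∧ α ≤ 0 ∧ 0 ≤ lam ∧ lam ≤ lamBar ∧ Hn (x, y) + u ∈ D ∧
    ∀ z ∈ Yn, gn (x, y) + α ≤ gn (x, z) + lam * infDist (Hn (x, z)) D + τn

/-- Objective function of (P)^ν: `f^ν(x,y) + σ^ν ‖u‖ - θ^ν α`. -/
def PnuObj (fn : Rn n × Rn m → EReal) (σn θn : ℝ)
    (x : Rn n) (y : Rn m) (u : Q) (α : ℝ) : EReal :=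
  fn (x, y) + ((σn * ‖u‖ - θn * α : ℝ) : EReal)

/-- The minimum value `𝔪^ν` of (P)^ν. -/
def PnuVal (X : Set (Rn n)) (Y : Set (Rn m)) (D : Set Q) (Yn : Set (Rn m))
    (fn : Rn n × Rn m → EReal) (gn : Rn n × Rn m → ℝ) (Hn : Rn n × Rn m → Q)
    (σn θn lamBar τn : ℝ) : EReal :=
  ⨅ (x : Rn n) (y : Rn m) (u : Q) (α : ℝ) (lam : ℝ)
    (_ : PnuFeas X Y D Yn gn Hn lamBar τn x y u α lam),
    PnuObj fn σn θn x y u α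

/-- `ε`-optimal solution of (P)^ν: feasible with finite objective value at most `𝔪^ν + ε`. -/
def PnuEps (X : Set (Rn n)) (Y : Set (Rn m)) (D : Set Q) (Yn : Set (Rn m))
    (fn : Rn n × Rn m → EReal) (gn : Rn n × Rn m → ℝ) (Hn : Rn n × Rn m → Q)
    (σn θn lamBar τn ε : ℝ)
    (x : Rn n) (y : Rn m) (u : Q) (α lam : ℝ) : Prop :=
  PnuFeas X Y D Yn gn Hn lamBar τn x y u α lam ∧
    PnuObj fn σn θn x y u α ≠ ⊤ ∧
    PnuObj fn σn θn x y u α ≤ PnuVal X Y D Yn fn gn Hn σn θn lamBar τn + (ε : EReal)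

/-- The value function `V(x,u) = inf_{y ∈ Y} { g(x,y) | H(x,y) + u ∈ D }`. -/
def Vfun (Y : Set (Rn m)) (D : Set Q)
    (g : Rn n × Rn m → ℝ) (H : Rn n × Rn m → Q)
    (x : Rn n) (u : Q) : EReal :=
  ⨅ (y : Rn m) (_ : y ∈ Y ∧ H (x, y) + u ∈ D), (g (x, y) : EReal)

/-- The value function `V` is calm at `x` with penalty threshold `lam`. -/
def CalmAtWith (Y : Set (Rn m)) (D : Set Q)
    (g : Rn n × Rn m → ℝ) (H : Rn n × Rn m → Q)
    (x : Rn n) (lam : ℝ) : Prop :=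
  0 ≤ lam ∧ ∀ u : Q,
    Vfun Y D g H x 0 - ((lam * ‖u‖ : ℝ) : EReal) ≤ Vfun Y D g H x u

/-- The value function `V` is calm at `x`. -/
def CalmAt (Y : Set (Rn m)) (D : Set Q)
    (g : Rn n × Rn m → ℝ) (H : Rn n × Rn m → Q) (x : Rn n) : Prop :=
  ∃ lam : ℝ, CalmAtWith Y D g H x lam

/-- The value function `V` is locally calm at `xbar`. -/
def LocallyCalmAt (Y : Set (Rn m)) (D : Set Q)
    (g : Rn n × Rn m → ℝ) (H : Rn n × Rn m → Q) (xbar : Rn n) : Prop :=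
  ∃ lam ρ : ℝ, 0 ≤ lam ∧ 0 < ρ ∧
    ∀ x ∈ Metric.closedBall xbar ρ, ∀ u : Q,
      Vfun Y D g H x 0 - ((lam * ‖u‖ : ℝ) : EReal) ≤ Vfun Y D g H x u

/-- The penalty-based value function `μ(x,λ) = inf_{y ∈ S} [g(x,y) + λ dist(H(x,y), D)]`. -/
def muSet (S : Set (Rn m)) (D : Set Q)
    (g : Rn n × Rn m → ℝ) (H : Rn n × Rn m → Q)
    (x : Rn n) (lam : ℝ) : EReal :=
  ⨅ (y : Rn m) (_ : y ∈ S), ((g (x, y) + lam * infDist (H (x, y)) D : ℝ) : EReal)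

/-- The Basic Assumption (Assumption 2.1). -/
structure BasicAssumption (X : Set (Rn n)) (Y : Set (Rn m)) (D : Set Q)
    (Yν : ℕ → Set (Rn m))
    (f : Rn n × Rn m → EReal) (fν : ℕ → Rn n × Rn m → EReal)
    (g : Rn n × Rn m → ℝ) (gν : ℕ → Rn n × Rn m → ℝ)
    (H : Rn n × Rn m → Q) (Hν : ℕ → Rn n × Rn m → Q)
    (σ θ lamBar τν δ η : ℕ → ℝ) : Prop where
  X_nonempty : X.Nonempty
  X_closed : IsClosed X
  Y_nonempty : Y.Nonempty
  Y_closed : IsClosed Y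
  D_nonempty : D.Nonempty
  D_closed : IsClosed D
  Yν_nonempty : ∀ ν, (Yν ν).Nonempty
  Yν_subset : ∀ ν, Yν ν ⊆ Y
  Yν_conv : ∀ y : Rn m,
    Tendsto (fun ν => infDist y (Yν ν)) atTop (𝓝 (infDist y Y))
  δ_lim : Tendsto δ atTop (𝓝 0)
  g_err : ∀ ν, ∀ x ∈ X, ∀ y ∈ Y, |gν ν (x, y) - g (x, y)| ≤ δ ν
  g_cont : ContinuousOn g (X ×ˢ Y)
  η_lim : Tendsto η atTop (𝓝 0)
  H_err : ∀ ν, ∀ x ∈ X, ∀ y ∈ Y,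
    |infDist (Hν ν (x, y)) D - infDist (H (x, y)) D| ≤ η ν
  H_cont : ContinuousOn H (X ×ˢ Y)
  f_ne_bot : ∀ p, f p ≠ ⊥
  fν_ne_bot : ∀ ν p, fν ν p ≠ ⊥
  f_limsup : ∀ x ∈ X, ∀ y ∈ Y,
    limsup (fun ν => fν ν (x, y)) atTop ≤ f (x, y)
  f_liminf : ∀ x ∈ X, ∀ y ∈ Y, ∀ (xs : ℕ → Rn n) (ys : ℕ → Rn m),
    (∀ ν, xs ν ∈ X) → (∀ ν, ys ν ∈ Y) →
    Tendsto xs atTop (𝓝 x) → Tendsto ys atTop (𝓝 y) →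
    f (x, y) ≤ liminf (fun ν => fν ν (xs ν, ys ν)) atTop
  σ_nonneg : ∀ ν, 0 ≤ σ ν
  θ_nonneg : ∀ ν, 0 ≤ θ ν
  lamBar_nonneg : ∀ ν, 0 ≤ lamBar ν
  τν_nonneg : ∀ ν, 0 ≤ τν ν
  lamBar_top : Tendsto lamBar atTop atTop
  ση_lim : Tendsto (fun ν => σ ν * η ν) atTop (𝓝 0)
  θlamη_lim : Tendsto (fun ν => θ ν * lamBar ν * η ν) atTop (𝓝 0)
  θδ_lim : Tendsto (fun ν => θ ν * δ ν) atTop (𝓝 0)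

/-- Membership in the set `C` of Section 4. -/
def Cmem (X : Set (Rn n)) (Y : Set (Rn m)) (D : Set Q)
    (fn : Rn n × Rn m → EReal) (Hn : Rn n × Rn m → Q) (lamBar : ℝ)
    (x : Rn n) (y : Rn m) (u : Q) (α lam : ℝ) : Prop :=
  x ∈ X ∧ y ∈ Y ∧ α ≤ 0 ∧ 0 ≤ lam ∧ lam ≤ lamBar ∧
    Hn (x, y) + u ∈ D ∧ fn (x, y) ≠ ⊤

/-- The constraint function `ψ_z`. -/
def psiz (D : Set Q) (gn : Rn n × Rn m → ℝ) (Hn : Rn n × Rn m → Q) (τn : ℝ)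
    (z : Rn m) (x : Rn n) (y : Rn m) (α lam : ℝ) : ℝ :=
  gn (x, y) + α - gn (x, z) - lam * infDist (Hn (x, z)) D - τn

/-- Feasibility of the master problem with constraint index set `S`:
`w ∈ C` and `ψ_z(w) ≤ 0` for all `z ∈ S`. -/
def MFeas (X : Set (Rn n)) (Y : Set (Rn m)) (D : Set Q)
    (fn : Rn n × Rn m → EReal) (gn : Rn n × Rn m → ℝ) (Hn : Rn n × Rn m → Q)
    (lamBar τn : ℝ) (S : Set (Rn m))
    (x : Rn n) (y : Rn m) (u : Q) (α lam : ℝ) : Prop :=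
  Cmem X Y D fn Hn lamBar x y u α lam ∧
    ∀ z ∈ S, psiz D gn Hn τn z x y α lam ≤ 0

/-- Minimum value of the master problem with constraint index set `S`;
for `S = Y^ν` this is the minimum value `𝔪^ν` of (P)^ν. -/
def MVal (X : Set (Rn n)) (Y : Set (Rn m)) (D : Set Q)
    (fn : Rn n × Rn m → EReal) (gn : Rn n × Rn m → ℝ) (Hn : Rn n × Rn m → Q)
    (σn θn lamBar τn : ℝ) (S : Set (Rn m)) : EReal :=
  ⨅ (x : Rn n) (y : Rn m) (u : Q) (α : ℝ) (lam : ℝ)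
    (_ : MFeas X Y D fn gn Hn lamBar τn S x y u α lam),
    PnuObj fn σn θn x y u α


private lemma ereal_aux_abs_infDist {Q : Type*} [NormedAddCommGroup Q] (D : Set Q) (p q : Q) :
    |infDist p D - infDist q D| ≤ ‖p - q‖ := by
  have h1 := Metric.infDist_le_infDist_add_dist (x := p) (y := q) (s := D)
  have h2 := Metric.infDist_le_infDist_add_dist (x := q) (y := p) (s := D)
  rw [dist_eq_norm] at h1 h2
  have h3 : ‖q - p‖ = ‖p - q‖ := norm_sub_rev q p
  rw [abs_sub_le_iff]
  constructor <;> linarith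

private lemma lam_d_aux {lam lam' dd dd' lb M1 e : ℝ} (h1 : 0 ≤ lam) (h2 : lam ≤ lb)
    (h4 : |lam - lam'| ≤ e) (h5 : |dd - dd'| ≤ e) (h6 : 0 ≤ dd') (h7 : dd' ≤ M1)
    (h8 : 0 ≤ e) : lam * dd ≤ lam' * dd' + (lb + M1) * e := by
  obtain ⟨h4a, h4b⟩ := abs_le.mp h4
  obtain ⟨h5a, h5b⟩ := abs_le.mp h5
  nlinarith [mul_le_mul_of_nonneg_right h4b h6, mul_le_mul_of_nonneg_left h5b h1,
    mul_le_mul_of_nonneg_left h7 h8, mul_le_mul_of_nonneg_right h2 h8,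
    mul_le_mul_of_nonneg_right h7 (abs_nonneg (lam - lam'))]

set_option maxHeartbeats 2000000 in
/-- Proposition 4.2: convergence of the outer approximation algorithm for (P)^ν. -/
theorem outer_approximation_algorithm
    [NormedSpace ℝ Q] [FiniteDimensional ℝ Q]
    (X : Set (Rn n)) (Y : Set (Rn m)) (D : Set Q) (Yn : Set (Rn m))
    (fn : Rn n × Rn m → EReal) (gn : Rn n × Rn m → ℝ) (Hn : Rn n × Rn m → Q)
    (σn θn lamBar τn : ℝ)
    (hσ : 0 ≤ σn) (hθ : 0 ≤ θn) (hlamBar : 0 ≤ lamBar) (hτn : 0 ≤ τn)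
    (hfn_bot : ∀ p, fn p ≠ ⊥)
    (hXne : X.Nonempty) (hXc : IsClosed X)
    (hYne : Y.Nonempty) (hYc : IsClosed Y)
    (hDne : D.Nonempty) (hDc : IsClosed D)
    (hYnne : Yn.Nonempty) (hYncpt : IsCompact Yn) (hYnY : Yn ⊆ Y)
    (hgcont : Continuous gn) (hHcont : Continuous Hn)
    (hdomc : IsClosed {p : Rn n × Rn m | fn p ≠ ⊤})
    (hfcont : ContinuousOn fn {p : Rn n × Rn m | fn p ≠ ⊤})
    (hunif : ∀ xb ∈ X, ∀ ε : ℝ, 0 < ε → ∃ ρ : ℝ, 0 < ρ ∧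
      ∀ z ∈ Yn, ∀ x ∈ X, dist x xb ≤ ρ →
        |gn (x, z) - gn (xb, z)| ≤ ε ∧ ‖Hn (x, z) - Hn (xb, z)‖ ≤ ε)
    -- algorithm data and iterates
    (ε δ : ℕ → ℝ) (hε0 : ∀ k, 0 ≤ ε k) (hδ0 : ∀ k, 0 ≤ δ k)
    (hεlim : Tendsto ε atTop (𝓝 0)) (hδlim : Tendsto δ atTop (𝓝 0))
    (xs : ℕ → Rn n) (ys : ℕ → Rn m) (us : ℕ → Q) (αs lams : ℕ → ℝ)
    (zs : ℕ → Rn m) (Yk : ℕ → Set (Rn m))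
    (hinit : Cmem X Y D fn Hn lamBar (xs 0) (ys 0) (us 0) (αs 0) (lams 0))
    (hY0 : Yk 0 = ∅)
    (hYstep : ∀ k : ℕ, Yk (k + 1) = Yk k ∪ {zs (k + 1)})
    -- Step 1: z^{k+1} is a δ^{k+1}-minimizer of the penalized lower-level problem
    (hz : ∀ k : ℕ, zs (k + 1) ∈ Yn ∧ ∀ z ∈ Yn,
      gn (xs k, zs (k + 1)) + lams k * infDist (Hn (xs k, zs (k + 1))) D ≤
        gn (xs k, z) + lams k * infDist (Hn (xs k, z)) D + δ (k + 1))
    -- Step 2: w^{k+1} is an ε^{k+1}-minimizer of the master problem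
    (hw : ∀ k : ℕ,
      MFeas X Y D fn gn Hn lamBar τn (Yk (k + 1))
        (xs (k + 1)) (ys (k + 1)) (us (k + 1)) (αs (k + 1)) (lams (k + 1)) ∧
      PnuObj fn σn θn (xs (k + 1)) (ys (k + 1)) (us (k + 1)) (αs (k + 1)) ≠ ⊤ ∧
      PnuObj fn σn θn (xs (k + 1)) (ys (k + 1)) (us (k + 1)) (αs (k + 1)) ≤
        MVal X Y D fn gn Hn σn θn lamBar τn (Yk (k + 1)) + ((ε (k + 1) : ℝ) : EReal))
    -- convergence along a subsequence N
    (φ : ℕ → ℕ) (hφ : StrictMono φ)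
    (hatx : Rn n) (haty : Rn m) (hatu : Q) (hatα hatlam : ℝ)
    (hcx : Tendsto (fun k => xs (φ k)) atTop (𝓝 hatx))
    (hcy : Tendsto (fun k => ys (φ k)) atTop (𝓝 haty))
    (hcu : Tendsto (fun k => us (φ k)) atTop (𝓝 hatu))
    (hcα : Tendsto (fun k => αs (φ k)) atTop (𝓝 hatα))
    (hclam : Tendsto (fun k => lams (φ k)) atTop (𝓝 hatlam)) :
    (MFeas X Y D fn gn Hn lamBar τn Yn hatx haty hatu hatα hatlam ∧
      PnuObj fn σn θn hatx haty hatu hatα ≠ ⊤ ∧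
      PnuObj fn σn θn hatx haty hatu hatα =
        MVal X Y D fn gn Hn σn θn lamBar τn Yn) ∧
    Tendsto (fun k => PnuObj fn σn θn (xs (φ k)) (ys (φ k)) (us (φ k)) (αs (φ k)))
      atTop (𝓝 (MVal X Y D fn gn Hn σn θn lamBar τn Yn)) := by

  classical
  -- basic facts about the iterates
  have hC : ∀ k, Cmem X Y D fn Hn lamBar (xs k) (ys k) (us k) (αs k) (lams k) := by
    intro k
    cases k with
    | zero => exact hinit
    | succ k => exact (hw k).1.1
  have hXk : ∀ k, xs k ∈ X := fun k => (hC k).1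
  have hYsk : ∀ k, ys k ∈ Y := fun k => (hC k).2.1
  have hαk : ∀ k, αs k ≤ 0 := fun k => (hC k).2.2.1
  have hlam0 : ∀ k, 0 ≤ lams k := fun k => (hC k).2.2.2.1
  have hlamB : ∀ k, lams k ≤ lamBar := fun k => (hC k).2.2.2.2.1
  have hHDk : ∀ k, Hn (xs k, ys k) + us k ∈ D := fun k => (hC k).2.2.2.2.2.1
  have hfk : ∀ k, fn (xs k, ys k) ≠ ⊤ := fun k => (hC k).2.2.2.2.2.2
  have hcons : ∀ k, ∀ z ∈ Yk (k + 1),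
      psiz D gn Hn τn z (xs (k + 1)) (ys (k + 1)) (αs (k + 1)) (lams (k + 1)) ≤ 0 :=
    fun k => (hw k).1.2
  -- Yk is contained in Yn and contains earlier z's
  have hYkYn : ∀ K, Yk K ⊆ Yn := by
    intro K
    induction K with
    | zero => rw [hY0]; exact empty_subset _
    | succ K ih =>
      rw [hYstep K]
      exact union_subset ih (by simpa using (hz K).1)
  have hmemYk : ∀ j K, j + 1 ≤ K → zs (j + 1) ∈ Yk K := by
    intro j K
    induction K with
    | zero => omega
    | succ K ih =>
      intro hjK
      rw [hYstep K]
      rcases Nat.lt_or_ge (j + 1) (K + 1) with h | h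
      · exact Or.inl (ih (by omega))
      · have : j + 1 = K + 1 := by omega
        right
        rw [this]
        rfl
  have hφat : Tendsto φ atTop atTop := hφ.tendsto_atTop
  -- membership of the limit point in C
  have hxX : hatx ∈ X := hXc.mem_of_tendsto hcx (Eventually.of_forall fun k => hXk _)
  have hyY : haty ∈ Y := hYc.mem_of_tendsto hcy (Eventually.of_forall fun k => hYsk _)
  have hα : hatα ≤ 0 := le_of_tendsto hcα (Eventually.of_forall fun k => hαk _)
  have hl0 : 0 ≤ hatlam := ge_of_tendsto hclam (Eventually.of_forall fun k => hlam0 _)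
  have hlB : hatlam ≤ lamBar := le_of_tendsto hclam (Eventually.of_forall fun k => hlamB _)
  have hpairt : Tendsto (fun k => (xs (φ k), ys (φ k))) atTop (𝓝 (hatx, haty)) :=
    hcx.prodMk_nhds hcy
  have hDhat : Hn (hatx, haty) + hatu ∈ D := by
    refine hDc.mem_of_tendsto (((hHcont.tendsto _).comp hpairt).add hcu)
      (Eventually.of_forall fun k => hHDk _)
  have hfhat : fn (hatx, haty) ≠ ⊤ := by
    have : (hatx, haty) ∈ {p : Rn n × Rn m | fn p ≠ ⊤} :=
      hdomc.mem_of_tendsto hpairt (Eventually.of_forall fun k => hfk _)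
    exact this
  have hChat : Cmem X Y D fn Hn lamBar hatx haty hatu hatα hatlam :=
    ⟨hxX, hyY, hα, hl0, hlB, hDhat, hfhat⟩
  -- the constraints ψ_z(ŵ) ≤ 0 for z ∈ Yn
  -- bound on infDist at hatx
  obtain ⟨z₀, hz₀, hMz₀⟩ : ∃ z₀ ∈ Yn, ∀ z' ∈ Yn,
      infDist (Hn (hatx, z')) D ≤ infDist (Hn (hatx, z₀)) D := by
    have hcont : ContinuousOn (fun z' : Rn m => infDist (Hn (hatx, z')) D) Yn :=
      ((continuous_infDist_pt D).comp (hHcont.comp (Continuous.prodMk_right hatx))).continuousOn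
    obtain ⟨z₀, hz₀, hmax⟩ := hYncpt.exists_isMaxOn hYnne hcont
    exact ⟨z₀, hz₀, fun z' hz' => hmax hz'⟩
  set M : ℝ := infDist (Hn (hatx, z₀)) D with hMdef
  have hM0 : 0 ≤ M := infDist_nonneg
  have hM : ∀ z' ∈ Yn, infDist (Hn (hatx, z')) D ≤ M := hMz₀
  have hψz : ∀ z ∈ Yn, psiz D gn Hn τn z hatx haty hatα hatlam ≤ 0 := by
    intro z hzYn
    have key : ∀ ε' : ℝ, 0 < ε' → gn (hatx, haty) + hatα ≤
        gn (hatx, z) + hatlam * infDist (Hn (hatx, z)) D + τn + ε' := by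
      intro ε' hε'
      set C0 : ℝ := 4 + 3 * (lamBar + (M + 1)) with hC0def
      have hC0pos : 0 < C0 := by simp only [hC0def]; nlinarith
      set e : ℝ := min 1 (ε' / C0) with hedef
      have he0 : 0 < e := lt_min one_pos (div_pos hε' hC0pos)
      have he1 : e ≤ 1 := min_le_left _ _
      have heC : C0 * e ≤ ε' := by
        have : e ≤ ε' / C0 := min_le_right _ _
        calc C0 * e ≤ C0 * (ε' / C0) := by nlinarith
        _ = ε' := by field_simp
      obtain ⟨ρ, hρ0, hρ⟩ := hunif hatx hxX e he0
      -- eventual properties of the subsequence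
      have hev1 : ∀ᶠ j in atTop, dist (xs (φ j)) hatx ≤ ρ := by
        have := hcx.eventually_mem (Metric.closedBall_mem_nhds hatx hρ0)
        filter_upwards [this] with j hj using hj
      have hev2 : ∀ᶠ j in atTop, |lams (φ j) - hatlam| ≤ e := by
        have := hclam.eventually_mem (Metric.closedBall_mem_nhds hatlam he0)
        filter_upwards [this] with j hj
        simpa [Real.dist_eq] using hj
      have hev3 : ∀ᶠ j in atTop, δ (φ j + 1) ≤ e := by
        have ht : Tendsto (fun j => δ (φ j + 1)) atTop (𝓝 0) :=
          hδlim.comp ((tendsto_add_atTop_nat 1).comp hφat)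
        have := ht.eventually_mem (Metric.closedBall_mem_nhds (0 : ℝ) he0)
        filter_upwards [this] with j hj
        have : |δ (φ j + 1)| ≤ e := by simpa [Real.dist_eq] using hj
        exact (abs_le.mp this).2
      obtain ⟨j, ⟨hj1, hj2⟩, hj3⟩ := ((hev1.and hev2).and hev3).exists
      set a := φ j with hadef
      set ζ := zs (a + 1) with hζdef
      have hζYn : ζ ∈ Yn := (hz a).1
      -- uniform-continuity estimates helper
      have hest : ∀ z' ∈ Yn, ∀ b : ℕ, dist (xs b) hatx ≤ ρ →
          |gn (xs b, z') - gn (hatx, z')| ≤ e ∧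
          |infDist (Hn (xs b, z')) D - infDist (Hn (hatx, z')) D| ≤ e := by
        intro z' hz' b hb
        obtain ⟨hg, hH⟩ := hρ z' hz' (xs b) (hXk b) hb
        refine ⟨hg, le_trans (ereal_aux_abs_infDist D _ _) hH⟩
      have hev4 : ∀ᶠ j' in atTop, a + 1 ≤ φ j' := hφat.eventually_ge_atTop (a + 1)
      have main : ∀ᶠ j' in atTop, gn (xs (φ j'), ys (φ j')) + αs (φ j') ≤
          gn (hatx, z) + hatlam * infDist (Hn (hatx, z)) D + τn + ε' := by
        filter_upwards [hev1, hev2, hev4] with j' h1 h2 h4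
        set b := φ j' with hbdef
        obtain ⟨c, hc⟩ : ∃ c, b = c + 1 := ⟨b - 1, by omega⟩
        have hζYk : ζ ∈ Yk b := by rw [hc]; exact hmemYk a (c + 1) (by omega)
        have hcon : psiz D gn Hn τn ζ (xs b) (ys b) (αs b) (lams b) ≤ 0 := by
          rw [hc] at hζYk ⊢
          exact hcons c ζ hζYk
        rw [psiz] at hcon
        have hstep := (hz a).2 z hzYn
        -- estimates at b with ζ
        obtain ⟨hgbζ, hdbζ⟩ := hest ζ hζYn b h1
        obtain ⟨hgaζ, hdaζ⟩ := hest ζ hζYn a hj1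
        obtain ⟨hgaz, hdaz⟩ := hest z hzYn a hj1
        have hdζM : infDist (Hn (hatx, ζ)) D ≤ M := hM ζ hζYn
        have hdzM : infDist (Hn (hatx, z)) D ≤ M := hM z hzYn
        have hdaζM : infDist (Hn (xs a, ζ)) D ≤ M + 1 := by
          have := (abs_le.mp hdaζ).2
          linarith
        have h0ζ : (0:ℝ) ≤ infDist (Hn (hatx, ζ)) D := infDist_nonneg
        have h0z : (0:ℝ) ≤ infDist (Hn (hatx, z)) D := infDist_nonneg
        have h0aζ : (0:ℝ) ≤ infDist (Hn (xs a, ζ)) D := infDist_nonneg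
        -- P1
        have P1 : lams b * infDist (Hn (xs b, ζ)) D ≤
            hatlam * infDist (Hn (hatx, ζ)) D + (lamBar + (M + 1)) * e :=
          lam_d_aux (hlam0 b) (hlamB b) h2 hdbζ h0ζ (by linarith) he0.le
        -- P2
        have P2 : hatlam * infDist (Hn (hatx, ζ)) D ≤
            lams a * infDist (Hn (xs a, ζ)) D + (lamBar + (M + 1)) * e := by
          refine lam_d_aux hl0 hlB ?_ ?_ h0aζ hdaζM he0.le
          · rwa [abs_sub_comm]
          · rwa [abs_sub_comm]
        -- P3
        have P3 : lams a * infDist (Hn (xs a, z)) D ≤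
            hatlam * infDist (Hn (hatx, z)) D + (lamBar + (M + 1)) * e :=
          lam_d_aux (hlam0 a) (hlamB a) hj2 hdaz h0z (by linarith) he0.le
        have hg1 := (abs_le.mp hgbζ).2
        have hg2 := (abs_le.mp hgaζ).1
        have hg3 := (abs_le.mp hgaz).2
        have hfin : gn (xs b, ys b) + αs b ≤
            gn (hatx, z) + hatlam * infDist (Hn (hatx, z)) D + τn + C0 * e := by
          simp only [hC0def]
          nlinarith [hcon, hstep, P1, P2, P3, hg1, hg2, hg3, hj3]
        linarith
      have hlhs : Tendsto (fun j' => gn (xs (φ j'), ys (φ j')) + αs (φ j')) atTop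
          (𝓝 (gn (hatx, haty) + hatα)) :=
        (((hgcont.tendsto _).comp hpairt).add hcα)
      exact le_of_tendsto hlhs main
    have hfin : gn (hatx, haty) + hatα ≤
        gn (hatx, z) + hatlam * infDist (Hn (hatx, z)) D + τn :=
      le_of_forall_pos_le_add fun ε' hε' => by linarith [key ε' hε']
    rw [psiz]
    linarith [hfin]
  have hMfeas : MFeas X Y D fn gn Hn lamBar τn Yn hatx haty hatu hatα hatlam := ⟨hChat, hψz⟩
  -- value helpers
  set L : EReal := MVal X Y D fn gn Hn σn θn lamBar τn Yn with hLdef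
  have MVal_le : ∀ (S : Set (Rn m)) x y u α lam, MFeas X Y D fn gn Hn lamBar τn S x y u α lam →
      MVal X Y D fn gn Hn σn θn lamBar τn S ≤ PnuObj fn σn θn x y u α := by
    intro S x y u α lam h
    exact iInf_le_of_le x (iInf_le_of_le y (iInf_le_of_le u (iInf_le_of_le α
      (iInf_le_of_le lam (iInf_le _ h)))))
  have hmono : ∀ S : Set (Rn m), S ⊆ Yn →
      MVal X Y D fn gn Hn σn θn lamBar τn S ≤ L := by
    intro S hS
    refine le_iInf fun x => le_iInf fun y => le_iInf fun u => le_iInf fun α =>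
      le_iInf fun lam => le_iInf fun hfe => ?_
    exact MVal_le S x y u α lam ⟨hfe.1, fun z hzS => hfe.2 z (hS hzS)⟩
  have hub : ∀ k, PnuObj fn σn θn (xs (k + 1)) (ys (k + 1)) (us (k + 1)) (αs (k + 1)) ≤
      L + ((ε (k + 1) : ℝ) : EReal) := by
    intro k
    refine le_trans (hw k).2.2 (add_le_add (hmono _ (hYkYn _)) le_rfl)
  have hobj_ne_bot : ∀ (x : Rn n) (y : Rn m) (u : Q) (α : ℝ), fn (x, y) ≠ (⊥ : EReal) →
      PnuObj fn σn θn x y u α ≠ ⊥ := by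
    intro x y u α h
    rw [PnuObj]
    exact fun hb => (EReal.add_eq_bot_iff.mp hb).elim h (EReal.coe_ne_bot _)
  have hLbot : L ≠ ⊥ := by
    intro hLb
    have h1 := hub 0
    rw [hLb, EReal.bot_add] at h1
    exact hobj_ne_bot _ _ _ _ (hfn_bot _) (le_bot_iff.mp h1)
  have hhat_ne_top : PnuObj fn σn θn hatx haty hatu hatα ≠ ⊤ := by
    rw [PnuObj]
    obtain ⟨r, hr⟩ : ∃ r : ℝ, fn (hatx, haty) = (r : EReal) :=
      ⟨(fn (hatx, haty)).toReal, (EReal.coe_toReal hfhat (hfn_bot _)).symm⟩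
    rw [hr, ← EReal.coe_add]
    exact EReal.coe_ne_top _
  have hLle : L ≤ PnuObj fn σn θn hatx haty hatu hatα := MVal_le Yn _ _ _ _ _ hMfeas
  have hLtop : L ≠ ⊤ := fun h => hhat_ne_top (top_le_iff.mp (h ▸ hLle))
  -- convergence of objective values
  have hfnt : Tendsto (fun k => fn (xs (φ k), ys (φ k))) atTop (𝓝 (fn (hatx, haty))) := by
    have hto : Tendsto (fun k => (xs (φ k), ys (φ k))) atTop
        (𝓝[{p : Rn n × Rn m | fn p ≠ ⊤}] (hatx, haty)) :=
      tendsto_nhdsWithin_iff.mpr ⟨hpairt, Eventually.of_forall fun k => hfk _⟩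
    exact Filter.Tendsto.comp (hfcont (hatx, haty) hfhat) hto
  have hrt : Tendsto (fun k => ((σn * ‖us (φ k)‖ - θn * αs (φ k) : ℝ) : EReal)) atTop
      (𝓝 ((σn * ‖hatu‖ - θn * hatα : ℝ) : EReal)) :=
    (continuous_coe_real_ereal.tendsto _).comp
      ((hcu.norm.const_mul σn).sub (hcα.const_mul θn))
  have hψt : Tendsto (fun k => PnuObj fn σn θn (xs (φ k)) (ys (φ k)) (us (φ k)) (αs (φ k)))
      atTop (𝓝 (PnuObj fn σn θn hatx haty hatu hatα)) := by
    simp only [PnuObj]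
    have hadd : ContinuousAt (fun p : EReal × EReal => p.1 + p.2)
        (fn (hatx, haty), ((σn * ‖hatu‖ - θn * hatα : ℝ) : EReal)) :=
      EReal.continuousAt_add (Or.inr (EReal.coe_ne_bot _)) (Or.inr (EReal.coe_ne_top _))
    exact hadd.tendsto.comp (hfnt.prodMk_nhds hrt)
  -- upper bound on the limit value
  obtain ⟨l, hl⟩ : ∃ l : ℝ, L = (l : EReal) :=
    ⟨L.toReal, (EReal.coe_toReal hLtop hLbot).symm⟩
  have hub' : ∀ᶠ k in atTop,
      PnuObj fn σn θn (xs (φ k)) (ys (φ k)) (us (φ k)) (αs (φ k)) ≤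
        L + ((ε (φ k) : ℝ) : EReal) := by
    filter_upwards [eventually_ge_atTop 1] with k hk
    obtain ⟨c, hc⟩ : ∃ c, φ k = c + 1 := ⟨φ k - 1, by have := hφ.le_apply (x := k); omega⟩
    rw [hc]
    exact hub c
  have hεφ : Tendsto (fun k => ε (φ k)) atTop (𝓝 0) := hεlim.comp hφat
  have hRt : Tendsto (fun k => L + ((ε (φ k) : ℝ) : EReal)) atTop (𝓝 L) := by
    rw [hl]
    simp only [← EReal.coe_add]
    have h1 : Tendsto (fun k => l + ε (φ k)) atTop (𝓝 l) := by
      simpa using tendsto_const_nhds.add hεφ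
    exact (continuous_coe_real_ereal.tendsto _).comp h1
  have hle : PnuObj fn σn θn hatx haty hatu hatα ≤ L :=
    le_of_tendsto_of_tendsto hψt hRt hub'
  have heq : PnuObj fn σn θn hatx haty hatu hatα = L := le_antisymm hle hLle
  exact ⟨⟨hMfeas, hhat_ne_top, heq⟩, heq ▸ hψt⟩
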